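/- For any family {A_t}_{t ∈ ℤ₋} of subsets of ℝⁿ such that ∏_{t ∈ ℤ₋} A_t ⊆ ℓ^w_-(ℝⁿ), the closure in (ℓ^w_-(ℝⁿ), ‖·‖_w) of the product set satisfies closure(∏_{t∈ℤ₋} A_t) = ∏_{t∈ℤ₋} closure(A_t) (intersected with ℓ^w_-(ℝⁿ)). -/

import Mathlib

open Filter
open scoped ENNReal NNReal

/-- A weighting sequence: strictly decreasing, valued in `(0,1]`, with `w 0 = 1`
and zero limit. Sequences `z : ℤ₋ → ℝⁿ` are represented as `z : ℕ → (Fin n → ℝ)`,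
where index `t : ℕ` stands for the time `-t`, so `w_{-t}` is `w t`. -/
def IsWeighting (w : ℕ → ℝ) : Prop :=
  StrictAnti w ∧ (∀ t, 0 < w t) ∧ (∀ t, w t ≤ 1) ∧ w 0 = 1 ∧
    Tendsto w atTop (nhds 0)

/-- Membership in the weighted space `ℓ^w_-`: finite weighted sup norm. -/
def memLw {E : Type*} [NormedAddCommGroup E] (w : ℕ → ℝ) (z : ℕ → E) : Prop :=
  BddAbove (Set.range fun t => ‖z t‖ * w t)

/-- The (extended) distance associated to the weighted norm `‖·‖_w`. -/
noncomputable def wEDist {E : Type*} [NormedAddCommGroup E] (w : ℕ → ℝ) (z u : ℕ → E) :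
    ℝ≥0∞ :=
  ⨆ t, edist (z t) (u t) * ENNReal.ofReal (w t)

/-- The metric closure of a set `S ⊆ ℓ^w_-` for the weighted norm. -/
def wClosure {E : Type*} [NormedAddCommGroup E] (w : ℕ → ℝ) (S : Set (ℕ → E)) :
    Set (ℕ → E) :=
  {u | ∀ ε : ℝ, 0 < ε → ∃ s ∈ S, wEDist w u s < ENNReal.ofReal ε}


/-- If the product set `∏_t A_t` is contained in `ℓ^w_-(ℝⁿ)`, then its closure in
`(ℓ^w_-(ℝⁿ), ‖·‖_w)` is the product of the closures of the `A_t` (intersected with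
`ℓ^w_-(ℝⁿ)`). -/
theorem closure_of_product (n : ℕ) (w : ℕ → ℝ) (hw : IsWeighting w)
    (A : ℕ → Set (Fin n → ℝ))
    (hA : ∀ z : ℕ → (Fin n → ℝ), (∀ t, z t ∈ A t) → memLw w z) :
    wClosure w {z : ℕ → (Fin n → ℝ) | ∀ t, z t ∈ A t}
      = {z : ℕ → (Fin n → ℝ) | (∀ t, z t ∈ closure (A t)) ∧ memLw w z} := by
  ext u
  simp only [wClosure, Set.mem_setOf_eq]
  constructor
  · intro h
    constructor
    · intro t
      rw [Metric.mem_closure_iff]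
      intro δ hδ
      obtain ⟨s, hs, hlt⟩ := h (δ * w t) (mul_pos hδ (hw.2.1 t))
      refine ⟨s t, hs t, ?_⟩
      have h1 : edist (u t) (s t) * ENNReal.ofReal (w t) < ENNReal.ofReal (δ * w t) :=
        lt_of_le_of_lt (le_iSup (fun t => edist (u t) (s t) * ENNReal.ofReal (w t)) t) hlt
      rw [ENNReal.ofReal_mul hδ.le] at h1
      have h2 : edist (u t) (s t) < ENNReal.ofReal δ :=
        (ENNReal.mul_lt_mul_iff_left (by simpa using (hw.2.1 t)) ENNReal.ofReal_ne_top).1 h1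
      rw [edist_dist] at h2
      exact (ENNReal.ofReal_lt_ofReal_iff hδ).1 h2
    · obtain ⟨s, hs, hlt⟩ := h 1 one_pos
      obtain ⟨M, hM⟩ := hA s hs
      refine ⟨M + 1, ?_⟩
      rintro x ⟨t, rfl⟩
      have h1 : edist (u t) (s t) * ENNReal.ofReal (w t) < ENNReal.ofReal 1 :=
        lt_of_le_of_lt (le_iSup (fun t => edist (u t) (s t) * ENNReal.ofReal (w t)) t) hlt
      rw [edist_dist, ← ENNReal.ofReal_mul dist_nonneg] at h1
      have h2 : dist (u t) (s t) * w t < 1 :=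
        (ENNReal.ofReal_lt_ofReal_iff one_pos).1 h1
      have hMt : ‖s t‖ * w t ≤ M := hM ⟨t, rfl⟩
      have : ‖u t‖ * w t ≤ (dist (u t) (s t) + ‖s t‖) * w t := by
        have h3 : ‖u t‖ ≤ dist (u t) (s t) + ‖s t‖ := by
          rw [dist_eq_norm]
          simpa using norm_add_le (u t - s t) (s t)
        exact mul_le_mul_of_nonneg_right h3 (hw.2.1 t).le
      rw [add_mul] at this
      show ‖u t‖ * w t ≤ M + 1
      linarith
  · rintro ⟨hcl, _⟩ ε hε
    have hex : ∀ t, ∃ a ∈ A t, dist (u t) a < ε / 2 := fun t =>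
      Metric.mem_closure_iff.1 (hcl t) _ (half_pos hε)
    choose s hsA hsd using hex
    refine ⟨s, hsA, ?_⟩
    have hle : wEDist w u s ≤ ENNReal.ofReal (ε / 2) := by
      refine iSup_le fun t => ?_
      rw [edist_dist]
      calc ENNReal.ofReal (dist (u t) (s t)) * ENNReal.ofReal (w t)
          ≤ ENNReal.ofReal (ε / 2) * 1 :=
            mul_le_mul' (ENNReal.ofReal_le_ofReal (hsd t).le)
              (ENNReal.ofReal_le_one.2 (hw.2.2.1 t))
        _ = ENNReal.ofReal (ε / 2) := mul_one _
    exact hle.trans_lt ((ENNReal.ofReal_lt_ofReal_iff hε).2 (half_lt_self hε))
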